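/- Let G be a graph with blue set B. Let v_1, ..., v_k be the blue vertices having at least one white neighbor, and w_1, ..., w_ℓ be the white vertices having at least one blue neighbor. If k ≥ 3 and ℓ ≥ 3, then either the expected number of vertices forced blue in one step of probabilistic zero forcing is at least 2, or all but at most one of the v_i have exactly one white neighbor and there is a single white vertex adjacent to all of v_1, ..., v_k. -/

import Mathlib

open Finset

/-- Probability that white vertex `v` is forced blue in one step of probabilistic
zero forcing from blue set `B`: each blue neighbor `u` of `v` independently forces `v`
with probability `|N[u] ∩ B| / deg u`. -/
noncomputable def forceProb {V : Type*} [Fintype V] [DecidableEq V]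
    (G : SimpleGraph V) [DecidableRel G.Adj] (B : Finset V) (v : V) : ℝ :=
  1 - ∏ u ∈ B.filter (fun u => G.Adj u v),
      (1 - (((G.neighborFinset u ∩ B).card + 1 : ℝ) / (G.degree u)))

/-- Probability that the set of newly forced vertices in one step of probabilistic zero
forcing from blue set `B` is exactly `T` (white vertices turn blue independently). -/
noncomputable def stepMass {V : Type*} [Fintype V] [DecidableEq V]
    (G : SimpleGraph V) [DecidableRel G.Adj] (B T : Finset V) : ℝ :=
  if T ⊆ Bᶜ then
    ∏ v ∈ Bᶜ, (if v ∈ T then forceProb G B v else 1 - forceProb G B v)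
  else 0

/-- `probAllBlue G t B` is the probability that, starting from blue set `B`, all
vertices are blue after `t` steps of probabilistic zero forcing. -/
noncomputable def probAllBlue {V : Type*} [Fintype V] [DecidableEq V]
    (G : SimpleGraph V) [DecidableRel G.Adj] : ℕ → Finset V → ℝ
  | 0, B => if B = Finset.univ then 1 else 0
  | t + 1, B => ∑ T ∈ Bᶜ.powerset, stepMass G B T * probAllBlue G t (B ∪ T)

/-- Expected propagation time of probabilistic zero forcing from initial blue set `S`:
`E[τ] = ∑_{t ≥ 0} P(τ > t) = ∑_{t ≥ 0} (1 - P^{(t)}(G,S))`. -/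
noncomputable def ept {V : Type*} [Fintype V] [DecidableEq V]
    (G : SimpleGraph V) [DecidableRel G.Adj] (S : Finset V) : ℝ :=
  ∑' t : ℕ, (1 - probAllBlue G t S)

noncomputable def xx {V : Type*} [Fintype V] [DecidableEq V]
    (G : SimpleGraph V) [DecidableRel G.Adj] (B : Finset V) (u : V) : ℝ :=
  1 / ((G.neighborFinset u \ B).card : ℝ)

section Helpers

variable {V : Type*} [Fintype V] [DecidableEq V] {G : SimpleGraph V} [DecidableRel G.Adj]
  {B : Finset V} {u v w : V}

lemma xx_nonneg (u : V) : 0 ≤ xx G B u := by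
  unfold xx; positivity

lemma xx_le_one (h : (G.neighborFinset u \ B).Nonempty) : xx G B u ≤ 1 := by
  have h1 : (1:ℝ) ≤ ((G.neighborFinset u \ B).card : ℝ) := by
    exact_mod_cast card_pos.mpr h
  unfold xx
  rw [div_le_one (by linarith)]
  linarith

lemma xx_mul (h : (G.neighborFinset u \ B).Nonempty) :
    xx G B u * ((G.neighborFinset u \ B).card : ℝ) = 1 := by
  have h1 : (0:ℝ) < ((G.neighborFinset u \ B).card : ℝ) := by
    exact_mod_cast card_pos.mpr h
  unfold xx
  field_simp

lemma xx_le_of_le {n : ℕ} (hn : 0 < n) (h : n ≤ (G.neighborFinset u \ B).card) :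
    xx G B u ≤ 1 / (n:ℝ) := by
  unfold xx
  apply one_div_le_one_div_of_le (by exact_mod_cast hn) (by exact_mod_cast h)

lemma deg_split (u : V) :
    (G.degree u : ℝ) = ((G.neighborFinset u \ B).card : ℝ) + ((G.neighborFinset u ∩ B).card : ℝ) := by
  have := card_sdiff_add_card_inter (G.neighborFinset u) B
  have hdeg : G.degree u = (G.neighborFinset u).card := rfl
  rw [hdeg]
  exact_mod_cast this.symm

lemma mem_white_nbr (hw : w ∉ B) (h : G.Adj u w) : w ∈ G.neighborFinset u \ B := by
  simp [SimpleGraph.mem_neighborFinset, h, hw]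

lemma xx_le_pfrc (hw : w ∉ B) (h : G.Adj u w) :
    xx G B u ≤ ((G.neighborFinset u ∩ B).card + 1 : ℝ) / (G.degree u) := by
  have hd1 : (1:ℝ) ≤ ((G.neighborFinset u \ B).card : ℝ) := by
    exact_mod_cast card_pos.mpr ⟨w, mem_white_nbr hw h⟩
  have hb : (0:ℝ) ≤ ((G.neighborFinset u ∩ B).card : ℝ) := by positivity
  have hdeg := deg_split (G := G) (B := B) u
  unfold xx
  rw [div_le_div_iff₀ (by linarith) (by rw [hdeg]; linarith)]
  nlinarith

lemma pfrc_le_one (hw : w ∉ B) (h : G.Adj u w) :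
    ((G.neighborFinset u ∩ B).card + 1 : ℝ) / (G.degree u) ≤ 1 := by
  have hd1 : (1:ℝ) ≤ ((G.neighborFinset u \ B).card : ℝ) := by
    exact_mod_cast card_pos.mpr ⟨w, mem_white_nbr hw h⟩
  have hdeg := deg_split (G := G) (B := B) u
  rw [div_le_one (by rw [hdeg]; positivity)]
  rw [hdeg]; linarith

lemma pfrc_nonneg (u : V) : 0 ≤ ((G.neighborFinset u ∩ B).card + 1 : ℝ) / (G.degree u) := by
  positivity

lemma key (hw : w ∉ B) (T : Finset V) (hT : ∀ u ∈ T, u ∈ B ∧ G.Adj u w) :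
    1 - ∏ u ∈ T, (1 - xx G B u) ≤ forceProb G B w := by
  rw [forceProb]
  have hsub : T ⊆ B.filter (fun u => G.Adj u w) := fun u hu =>
    mem_filter.mpr ⟨(hT u hu).1, (hT u hu).2⟩
  have hmemf : ∀ u ∈ B.filter (fun u => G.Adj u w),
      0 ≤ 1 - ((G.neighborFinset u ∩ B).card + 1 : ℝ) / (G.degree u) := by
    intro u hu
    have := pfrc_le_one (B := B) hw (mem_filter.mp hu).2
    linarith
  have h1 : ∏ u ∈ B.filter (fun u => G.Adj u w),
      (1 - ((G.neighborFinset u ∩ B).card + 1 : ℝ) / (G.degree u))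
      ≤ ∏ u ∈ T, (1 - ((G.neighborFinset u ∩ B).card + 1 : ℝ) / (G.degree u)) := by
    rw [← prod_sdiff hsub]
    have h2 : ∏ u ∈ B.filter (fun u => G.Adj u w) \ T,
        (1 - ((G.neighborFinset u ∩ B).card + 1 : ℝ) / (G.degree u)) ≤ 1 := by
      apply prod_le_one
      · intro u hu; exact hmemf u (mem_sdiff.mp hu).1
      · intro u hu
        have := pfrc_nonneg (G := G) (B := B) u; linarith
    have h3 : (0:ℝ) ≤ ∏ u ∈ T,
        (1 - ((G.neighborFinset u ∩ B).card + 1 : ℝ) / (G.degree u)) :=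
      prod_nonneg fun u hu => hmemf u (hsub hu)
    nlinarith
  have h4 : ∏ u ∈ T, (1 - ((G.neighborFinset u ∩ B).card + 1 : ℝ) / (G.degree u))
      ≤ ∏ u ∈ T, (1 - xx G B u) := by
    apply prod_le_prod
    · intro u hu; exact hmemf u (hsub hu)
    · intro u hu
      have := xx_le_pfrc (B := B) hw (hT u hu).2
      linarith
  linarith

lemma forceProb_nonneg (hw : w ∉ B) : 0 ≤ forceProb G B w := by
  simpa using key (G := G) (B := B) hw ∅ (by simp)

lemma force_one (hu : u ∈ B) (hw : w ∉ B) (h : G.Adj u w) :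
    xx G B u ≤ forceProb G B w := by
  have := key (G := G) (B := B) hw {u} (by simp [hu, h])
  simpa using this

lemma force_two (hu : u ∈ B) (hv : v ∈ B) (hw : w ∉ B) (h1 : G.Adj u w) (h2 : G.Adj v w)
    (hne : u ≠ v) :
    1 - (1 - xx G B u) * (1 - xx G B v) ≤ forceProb G B w := by
  have := key (G := G) (B := B) hw {u, v} (by
    intro x hx
    rcases mem_insert.mp hx with rfl | hx
    · exact ⟨hu, h1⟩
    · rw [mem_singleton.mp hx]; exact ⟨hv, h2⟩)
  rwa [prod_pair hne] at this

lemma force_three {a b c : V} (ha : a ∈ B) (hb : b ∈ B) (hc : c ∈ B) (hw : w ∉ B)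
    (h1 : G.Adj a w) (h2 : G.Adj b w) (h3 : G.Adj c w)
    (hab : a ≠ b) (hac : a ≠ c) (hbc : b ≠ c) :
    1 - (1 - xx G B a) * ((1 - xx G B b) * (1 - xx G B c)) ≤ forceProb G B w := by
  have := key (G := G) (B := B) hw {a, b, c} (by
    intro x hx
    rcases mem_insert.mp hx with rfl | hx
    · exact ⟨ha, h1⟩
    rcases mem_insert.mp hx with rfl | hx
    · exact ⟨hb, h2⟩
    · rw [mem_singleton.mp hx]; exact ⟨hc, h3⟩)
  rwa [prod_insert (by simp [hab, hac]), prod_pair hbc] at this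

omit [Fintype V] in
lemma sum_ite_const {A s : Finset V} (hA : A ⊆ s) (t : ℝ) :
    ∑ w ∈ s, (if w ∈ A then t else 0) = t * A.card := by
  rw [sum_ite_mem, inter_eq_right.mpr hA, sum_const, nsmul_eq_mul, mul_comm]

end Helpers

set_option maxHeartbeats 2000000 in
/-- If at least 3 blue vertices have a white neighbor and at least 3 white vertices have
a blue neighbor, then either the expected number of vertices forced blue in one step of
probabilistic zero forcing is at least 2, or all but at most one of the blue vertices
with a white neighbor have exactly one white neighbor and there is a single white vertex
adjacent to all of them. -/
theorem expected_two_or_structure {V : Type*} [Fintype V] [DecidableEq V]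
    (G : SimpleGraph V) [DecidableRel G.Adj] (B : Finset V)
    (hk : 3 ≤ (B.filter (fun v => (G.neighborFinset v \ B).Nonempty)).card)
    (hl : 3 ≤ (Bᶜ.filter (fun w => (G.neighborFinset w ∩ B).Nonempty)).card) :
    2 ≤ ∑ v ∈ Bᶜ, forceProb G B v ∨
      ((∃ u₀, ∀ v ∈ B.filter (fun v => (G.neighborFinset v \ B).Nonempty),
          v ≠ u₀ → (G.neighborFinset v \ B).card = 1) ∧
        ∃ w ∉ B, ∀ v ∈ B.filter (fun v => (G.neighborFinset v \ B).Nonempty),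
          G.Adj v w) := by
  classical
  set K := B.filter (fun v => (G.neighborFinset v \ B).Nonempty) with hKdef
  set W := Bᶜ.filter (fun w => (G.neighborFinset w ∩ B).Nonempty) with hWdef
  -- basic membership facts
  have hKmem : ∀ u ∈ K, u ∈ B ∧ (G.neighborFinset u \ B).Nonempty := by
    intro u hu; exact mem_filter.mp hu
  have hKof : ∀ {u y : V}, u ∈ B → y ∉ B → G.Adj u y → u ∈ K := by
    intro u y huB hyB hadj
    exact mem_filter.mpr ⟨huB, ⟨y, mem_white_nbr hyB hadj⟩⟩
  have hadjof : ∀ {u y : V}, y ∈ G.neighborFinset u \ B → G.Adj u y ∧ y ∉ B := by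
    intro u y hy
    exact ⟨(SimpleGraph.mem_neighborFinset _ _ _).mp (mem_sdiff.mp hy).1, (mem_sdiff.mp hy).2⟩
  have hWof : ∀ {u y : V}, u ∈ B → y ∈ G.neighborFinset u \ B → y ∈ W := by
    intro u y huB hy
    refine mem_filter.mpr ⟨mem_compl.mpr (hadjof hy).2, ⟨u, mem_inter.mpr ⟨?_, huB⟩⟩⟩
    exact (SimpleGraph.mem_neighborFinset _ _ _).mpr (hadjof hy).1.symm
  have hWblue : ∀ w ∈ W, w ∉ B ∧ ∃ u ∈ B, G.Adj u w := by
    intro w hw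
    obtain ⟨hw1, hw2⟩ := mem_filter.mp hw
    obtain ⟨u, hu⟩ := hw2
    exact ⟨mem_compl.mp hw1, u, (mem_inter.mp hu).2,
      ((SimpleGraph.mem_neighborFinset _ _ _).mp (mem_inter.mp hu).1).symm⟩
  have hFsub : ∀ s : Finset V, s ⊆ Bᶜ →
      ∑ w ∈ s, forceProb G B w ≤ ∑ w ∈ Bᶜ, forceProb G B w := by
    intro s hs
    exact sum_le_sum_of_subset_of_nonneg hs
      (fun w hw _ => forceProb_nonneg (mem_compl.mp hw))
  have hAsubc : ∀ u : V, G.neighborFinset u \ B ⊆ Bᶜ := by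
    intro u y hy; exact mem_compl.mpr (mem_sdiff.mp hy).2
  by_cases hdisj : ∃ u1 ∈ K, ∃ u2 ∈ K, u1 ≠ u2 ∧
      (G.neighborFinset u1 \ B) ∩ (G.neighborFinset u2 \ B) = ∅
  · -- Case 1: two blue vertices with disjoint white neighborhoods
    left
    obtain ⟨u1, hu1, u2, hu2, hne, hdis⟩ := hdisj
    obtain ⟨hu1B, hd1⟩ := hKmem u1 hu1
    obtain ⟨hu2B, hd2⟩ := hKmem u2 hu2
    have hpt : ∀ w ∈ Bᶜ,
        (if w ∈ G.neighborFinset u1 \ B then xx G B u1 else 0)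
        + (if w ∈ G.neighborFinset u2 \ B then xx G B u2 else 0) ≤ forceProb G B w := by
      intro w hw
      have hwB : w ∉ B := mem_compl.mp hw
      by_cases h1 : w ∈ G.neighborFinset u1 \ B
      · by_cases h2 : w ∈ G.neighborFinset u2 \ B
        · exact absurd (hdis ▸ mem_inter.mpr ⟨h1, h2⟩) (notMem_empty w)
        · simp only [h1, h2, if_true, if_false, add_zero]
          exact force_one hu1B hwB (hadjof h1).1
      · by_cases h2 : w ∈ G.neighborFinset u2 \ B
        · simp only [h1, h2, if_true, if_false, zero_add]
          exact force_one hu2B hwB (hadjof h2).1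
        · simp only [h1, h2, if_false, add_zero]
          exact forceProb_nonneg hwB
    calc (2:ℝ) = xx G B u1 * (G.neighborFinset u1 \ B).card
          + xx G B u2 * (G.neighborFinset u2 \ B).card := by
            rw [xx_mul hd1, xx_mul hd2]; norm_num
      _ = ∑ w ∈ Bᶜ, ((if w ∈ G.neighborFinset u1 \ B then xx G B u1 else 0)
          + (if w ∈ G.neighborFinset u2 \ B then xx G B u2 else 0)) := by
            rw [sum_add_distrib, sum_ite_const (hAsubc u1), sum_ite_const (hAsubc u2)]
      _ ≤ ∑ w ∈ Bᶜ, forceProb G B w := sum_le_sum hpt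
  · push_neg at hdisj
    -- every pair of K-neighborhoods intersects
    have hint : ∀ u1 ∈ K, ∀ u2 ∈ K, u1 ≠ u2 →
        ((G.neighborFinset u1 \ B) ∩ (G.neighborFinset u2 \ B)).Nonempty := by
      intro u1 h1 u2 h2 hne
      exact hdisj u1 h1 u2 h2 hne
    by_cases hsimple : ∃ s ∈ K, (G.neighborFinset s \ B).card = 1
    · -- Case 2x: there is a simple blue vertex s with a unique white neighbor wst
      obtain ⟨s, hsK, hs1⟩ := hsimple
      obtain ⟨hsB, hsne⟩ := hKmem s hsK
      obtain ⟨wst, hwst⟩ := card_eq_one.mp hs1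
      have hwstmem : wst ∈ G.neighborFinset s \ B := by rw [hwst]; exact mem_singleton_self wst
      have hwstB : wst ∉ B := (hadjof hwstmem).2
      have hadjs : G.Adj s wst := (hadjof hwstmem).1
      -- every vertex of K is adjacent to wst
      have hadjall : ∀ u ∈ K, wst ∈ G.neighborFinset u \ B := by
        intro u hu
        by_cases hus : u = s
        · subst hus; exact hwstmem
        · obtain ⟨y, hy⟩ := hint u hu s hsK hus
          rw [hwst] at hy
          obtain ⟨hy1, hy2⟩ := mem_inter.mp hy
          rwa [mem_singleton.mp hy2] at hy1
      have hxs : xx G B s = 1 := by rw [xx, hs1]; norm_num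
      have hfwst : 1 ≤ forceProb G B wst := by
        have := force_one hsB hwstB hadjs
        rwa [hxs] at this
      set D := K.filter (fun u => 2 ≤ (G.neighborFinset u \ B).card) with hDdef
      by_cases hD : D.card ≤ 1
      · -- Structure case
        right
        have hDsub : ∀ v ∈ K, 2 ≤ (G.neighborFinset v \ B).card → v ∈ D := by
          intro v hv h2; exact mem_filter.mpr ⟨hv, h2⟩
        refine ⟨⟨if h : D.Nonempty then h.choose else s, ?_⟩, wst, hwstB, ?_⟩
        · intro v hv hvne
          have hv1 : 1 ≤ (G.neighborFinset v \ B).card := card_pos.mpr (hKmem v hv).2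
          by_contra hc
          have hv2 : 2 ≤ (G.neighborFinset v \ B).card := by omega
          have hvD : v ∈ D := hDsub v hv hv2
          have hDne : D.Nonempty := ⟨v, hvD⟩
          rw [dif_pos hDne] at hvne
          exact hvne (card_le_one.mp hD v hvD hDne.choose hDne.choose_spec)
        · intro v hv
          exact (hadjof (hadjall v hv)).1
      · push_neg at hD
        have hDmem : ∀ u ∈ D, u ∈ K ∧ 2 ≤ (G.neighborFinset u \ B).card := by
          intro u hu; exact mem_filter.mp hu
        by_cases hbig : ∃ u ∈ D, 3 ≤ (G.neighborFinset u \ B).card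
        · -- Case 2x-i
          left
          obtain ⟨u1, hu1D, hu1d3⟩ := hbig
          have hu2ex : (D.erase u1).Nonempty := by
            apply card_pos.mp
            have := card_erase_of_mem hu1D
            omega
          obtain ⟨u2, hu2e⟩ := hu2ex
          obtain ⟨hne21, hu2D⟩ := mem_erase.mp hu2e
          obtain ⟨hu1K, hu1d2⟩ := hDmem u1 hu1D
          obtain ⟨hu2K, hu2d2⟩ := hDmem u2 hu2D
          obtain ⟨hu1B, hu1ne⟩ := hKmem u1 hu1K
          obtain ⟨hu2B, hu2ne⟩ := hKmem u2 hu2K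
          have hne12 : u1 ≠ u2 := hne21.symm
          set x1 := xx G B u1 with hx1def
          set x2 := xx G B u2 with hx2def
          have hx1nn : 0 ≤ x1 := xx_nonneg u1
          have hx2nn : 0 ≤ x2 := xx_nonneg u2
          have hx13 : x1 ≤ 1/3 := by
            have := xx_le_of_le (G := G) (B := B) (u := u1) (n := 3) (by norm_num) hu1d3
            simpa using this
          have hx22 : x2 ≤ 1/2 := by
            have := xx_le_of_le (G := G) (B := B) (u := u2) (n := 2) (by norm_num) hu2d2
            simpa using this
          set A1 := (G.neighborFinset u1 \ B).erase wst with hA1def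
          set A2 := (G.neighborFinset u2 \ B).erase wst with hA2def
          have hA1sub : A1 ⊆ Bᶜ.erase wst := by
            intro y hy
            exact mem_erase.mpr ⟨(mem_erase.mp hy).1, hAsubc u1 (mem_erase.mp hy).2⟩
          have hA2sub : A2 ⊆ Bᶜ.erase wst := by
            intro y hy
            exact mem_erase.mpr ⟨(mem_erase.mp hy).1, hAsubc u2 (mem_erase.mp hy).2⟩
          have hA1card : (A1.card : ℝ) = ((G.neighborFinset u1 \ B).card : ℝ) - 1 := by
            rw [hA1def, card_erase_of_mem (hadjall u1 hu1K)]
            have : 1 ≤ (G.neighborFinset u1 \ B).card := by omega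
            push_cast [Nat.cast_sub this]
            ring
          have hA2card : (A2.card : ℝ) = ((G.neighborFinset u2 \ B).card : ℝ) - 1 := by
            rw [hA2def, card_erase_of_mem (hadjall u2 hu2K)]
            have : 1 ≤ (G.neighborFinset u2 \ B).card := by omega
            push_cast [Nat.cast_sub this]
            ring
          have hxm1 : x1 * ((G.neighborFinset u1 \ B).card : ℝ) = 1 := xx_mul hu1ne
          have hxm2 : x2 * ((G.neighborFinset u2 \ B).card : ℝ) = 1 := xx_mul hu2ne
          have hpt : ∀ w ∈ Bᶜ.erase wst,
              (if w ∈ A1 then x1 else 0) + (if w ∈ A2 then x2 * (1 - x1) else 0)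
                ≤ forceProb G B w := by
            intro w hw
            have hwB : w ∉ B := mem_compl.mp (mem_erase.mp hw).2
            by_cases h1 : w ∈ A1
            · have hadj1 : G.Adj u1 w := (hadjof (mem_erase.mp h1).2).1
              by_cases h2 : w ∈ A2
              · have hadj2 : G.Adj u2 w := (hadjof (mem_erase.mp h2).2).1
                have := force_two hu1B hu2B hwB hadj1 hadj2 hne12
                simp only [h1, h2, if_true]
                nlinarith
              · simp only [h1, h2, if_true, if_false, add_zero]
                exact force_one hu1B hwB hadj1
            · by_cases h2 : w ∈ A2
              · have hadj2 : G.Adj u2 w := (hadjof (mem_erase.mp h2).2).1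
                have := force_one hu2B hwB hadj2
                simp only [h1, h2, if_true, if_false, zero_add]
                nlinarith
              · simp only [h1, h2, if_false, add_zero]
                exact forceProb_nonneg hwB
          have hwstc : wst ∈ Bᶜ := mem_compl.mpr hwstB
          have hsum : x1 * A1.card + x2 * (1 - x1) * A2.card
              ≤ ∑ w ∈ Bᶜ.erase wst, forceProb G B w := by
            calc x1 * A1.card + x2 * (1 - x1) * A2.card
                = ∑ w ∈ Bᶜ.erase wst, ((if w ∈ A1 then x1 else 0)
                  + (if w ∈ A2 then x2 * (1 - x1) else 0)) := by
                  rw [sum_add_distrib, sum_ite_const hA1sub, sum_ite_const hA2sub]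
              _ ≤ ∑ w ∈ Bᶜ.erase wst, forceProb G B w := sum_le_sum hpt
          have hsplit : forceProb G B wst + ∑ w ∈ Bᶜ.erase wst, forceProb G B w
              = ∑ w ∈ Bᶜ, forceProb G B w := add_sum_erase _ _ hwstc
          have he1 : x1 * (A1.card : ℝ) = 1 - x1 := by
            rw [hA1card]; linear_combination hxm1
          have he2 : x2 * (1 - x1) * (A2.card : ℝ) = (1 - x1) * (1 - x2) := by
            rw [hA2card]; linear_combination (1-x1) * hxm2
          rw [← hsplit]
          have hfin : (2:ℝ) ≤ 1 + ((1 - x1) + (1 - x1) * (1 - x2)) := by nlinarith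
          rw [he1, he2] at hsum
          linarith
        · -- Case 2x-ii: every D vertex has exactly 2 white neighbors
          left
          push_neg at hbig
          have hd2 : ∀ u ∈ D, (G.neighborFinset u \ B).card = 2 := by
            intro u hu
            have h1 := (hDmem u hu).2
            have h2 := hbig u hu
            omega
          have hWe : 1 < (W.erase wst).card := by
            have := pred_card_le_card_erase (a := wst) (s := W)
            omega
          obtain ⟨w1, hw1, w2, hw2, hw12⟩ := one_lt_card.mp hWe
          obtain ⟨hw1ne, hw1W⟩ := mem_erase.mp hw1
          obtain ⟨hw2ne, hw2W⟩ := mem_erase.mp hw2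
          have hhalf : ∀ y ∈ W, y ≠ wst → 1/2 ≤ forceProb G B y := by
            intro y hyW hyne
            obtain ⟨hyB, u, huB, hadj⟩ := hWblue y hyW
            have huK : u ∈ K := hKof huB hyB hadj
            have hymem : y ∈ G.neighborFinset u \ B := mem_white_nbr hyB hadj
            have hus : u ≠ s := by
              intro h; subst h
              rw [hwst] at hymem
              exact hyne (mem_singleton.mp hymem)
            have hud2 : 2 ≤ (G.neighborFinset u \ B).card := by
              by_contra hc
              have h1 : (G.neighborFinset u \ B).card = 1 := by
                have := card_pos.mpr (hKmem u huK).2; omega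
              obtain ⟨z, hz⟩ := card_eq_one.mp h1
              have hyz : y = z := mem_singleton.mp (hz ▸ hymem)
              have hwz : wst = z := mem_singleton.mp (hz ▸ hadjall u huK)
              exact hyne (hyz.trans hwz.symm)
            have huD : u ∈ D := mem_filter.mpr ⟨huK, hud2⟩
            have hxu : xx G B u = 1/2 := by rw [xx, hd2 u huD]; norm_num
            have hf1 := force_one huB hyB hadj
            linarith
          have hw1h := hhalf w1 hw1W hw1ne
          have hw2h := hhalf w2 hw2W hw2ne
          have hsub3 : ({wst, w1, w2} : Finset V) ⊆ Bᶜ := by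
            intro y hy
            rcases mem_insert.mp hy with rfl | hy
            · exact mem_compl.mpr hwstB
            rcases mem_insert.mp hy with rfl | hy
            · exact (mem_filter.mp hw1W).1
            · rw [mem_singleton.mp hy]; exact (mem_filter.mp hw2W).1
          calc (2:ℝ) ≤ ∑ w ∈ ({wst, w1, w2} : Finset V), forceProb G B w := by
                rw [sum_insert (by simp [hw1ne.symm, hw2ne.symm]), sum_pair hw12]
                linarith
            _ ≤ ∑ w ∈ Bᶜ, forceProb G B w := hFsub _ hsub3
    · -- Case 2y: every K vertex has at least 2 white neighbors
      push_neg at hsimple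
      left
      have hK2 : ∀ u ∈ K, 2 ≤ (G.neighborFinset u \ B).card := by
        intro u hu
        have h1 := card_pos.mpr (hKmem u hu).2
        have h2 := hsimple u hu
        omega
      by_cases hbig : ∃ u ∈ K, 3 ≤ (G.neighborFinset u \ B).card
      · -- Case 2y-i: some vertex with ≥ 3 white neighbors
        obtain ⟨u1, hu1K, hu1d3⟩ := hbig
        have hKe : 1 < (K.erase u1).card := by
          have := pred_card_le_card_erase (a := u1) (s := K); omega
        obtain ⟨u2, hu2e, u3, hu3e, hne23⟩ := one_lt_card.mp hKe
        obtain ⟨hne21, hu2K⟩ := mem_erase.mp hu2e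
        obtain ⟨hne31, hu3K⟩ := mem_erase.mp hu3e
        have hne12 : u1 ≠ u2 := hne21.symm
        have hne13 : u1 ≠ u3 := hne31.symm
        obtain ⟨hu1B, hu1ne⟩ := hKmem u1 hu1K
        obtain ⟨hu2B, hu2ne⟩ := hKmem u2 hu2K
        obtain ⟨hu3B, hu3ne⟩ := hKmem u3 hu3K
        set x1 := xx G B u1 with hx1def
        set x2 := xx G B u2 with hx2def
        set x3 := xx G B u3 with hx3def
        have hx1nn : 0 ≤ x1 := xx_nonneg u1
        have hx2nn : 0 ≤ x2 := xx_nonneg u2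
        have hx3nn : 0 ≤ x3 := xx_nonneg u3
        have hx11 : x1 ≤ 1/3 := by
          simpa using xx_le_of_le (G := G) (B := B) (u := u1) (n := 3) (by norm_num) hu1d3
        have hx21 : x2 ≤ 1/2 := by
          simpa using xx_le_of_le (G := G) (B := B) (u := u2) (n := 2) (by norm_num) (hK2 u2 hu2K)
        have hx31 : x3 ≤ 1/2 := by
          simpa using xx_le_of_le (G := G) (B := B) (u := u3) (n := 2) (by norm_num) (hK2 u3 hu3K)
        have hxm1 : x1 * ((G.neighborFinset u1 \ B).card : ℝ) = 1 := xx_mul hu1ne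
        have hxm2 : x2 * ((G.neighborFinset u2 \ B).card : ℝ) = 1 := xx_mul hu2ne
        have hxm3 : x3 * ((G.neighborFinset u3 \ B).card : ℝ) = 1 := xx_mul hu3ne
        have hpt : ∀ w ∈ Bᶜ,
            (if w ∈ G.neighborFinset u1 \ B then x1 else 0)
            + (if w ∈ G.neighborFinset u2 \ B then x2 * (1 - x1) else 0)
            + (if w ∈ G.neighborFinset u3 \ B then x3 * ((1 - x1) * (1 - x2)) else 0)
              ≤ forceProb G B w := by
          intro w hw
          have hwB : w ∉ B := mem_compl.mp hw
          by_cases h1 : w ∈ G.neighborFinset u1 \ B <;>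
            by_cases h2 : w ∈ G.neighborFinset u2 \ B <;>
              by_cases h3 : w ∈ G.neighborFinset u3 \ B <;>
                simp only [h1, h2, h3, if_true, if_false, add_zero, zero_add]
          · have hf := force_three hu1B hu2B hu3B hwB (hadjof h1).1 (hadjof h2).1
              (hadjof h3).1 hne12 hne13 hne23
            simp only [← hx1def, ← hx2def, ← hx3def] at hf
            nlinarith [hf]
          · have hf := force_two hu1B hu2B hwB (hadjof h1).1 (hadjof h2).1 hne12
            simp only [← hx1def, ← hx2def] at hf
            nlinarith [hf]
          · have hf := force_two hu1B hu3B hwB (hadjof h1).1 (hadjof h3).1 hne13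
            simp only [← hx1def, ← hx3def] at hf
            nlinarith [hf, mul_nonneg (mul_nonneg hx3nn (by linarith : (0:ℝ) ≤ 1 - x1)) hx2nn]
          · exact force_one hu1B hwB (hadjof h1).1
          · have hf := force_two hu2B hu3B hwB (hadjof h2).1 (hadjof h3).1 hne23
            simp only [← hx2def, ← hx3def] at hf
            nlinarith [hf, mul_nonneg hx1nn hx2nn,
              mul_nonneg (mul_nonneg hx1nn hx3nn) (by linarith : (0:ℝ) ≤ 1 - x2)]
          · have hf := force_one hu2B hwB (hadjof h2).1
            simp only [← hx2def] at hf
            nlinarith [hf, mul_nonneg hx2nn hx1nn]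
          · have hf := force_one hu3B hwB (hadjof h3).1
            simp only [← hx3def] at hf
            nlinarith [hf, mul_nonneg hx3nn hx1nn, mul_nonneg hx3nn hx2nn,
              mul_nonneg (mul_nonneg hx3nn hx1nn) hx2nn]
          · exact forceProb_nonneg hwB
        have he1 : x1 * ((G.neighborFinset u1 \ B).card : ℝ) = 1 := hxm1
        have he2 : x2 * (1 - x1) * ((G.neighborFinset u2 \ B).card : ℝ) = 1 - x1 := by
          linear_combination (1 - x1) * hxm2
        have he3 : x3 * ((1 - x1) * (1 - x2)) * ((G.neighborFinset u3 \ B).card : ℝ)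
            = (1 - x1) * (1 - x2) := by
          linear_combination ((1 - x1) * (1 - x2)) * hxm3
        calc (2:ℝ) ≤ 1 + ((1 - x1) + (1 - x1) * (1 - x2)) := by nlinarith
          _ = x1 * ((G.neighborFinset u1 \ B).card : ℝ)
              + x2 * (1 - x1) * ((G.neighborFinset u2 \ B).card : ℝ)
              + x3 * ((1 - x1) * (1 - x2)) * ((G.neighborFinset u3 \ B).card : ℝ) := by
            rw [he1, he2, he3]; ring
          _ = ∑ w ∈ Bᶜ, ((if w ∈ G.neighborFinset u1 \ B then x1 else 0)
              + (if w ∈ G.neighborFinset u2 \ B then x2 * (1 - x1) else 0)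
              + (if w ∈ G.neighborFinset u3 \ B then x3 * ((1 - x1) * (1 - x2)) else 0)) := by
            rw [sum_add_distrib, sum_add_distrib, sum_ite_const (hAsubc u1),
              sum_ite_const (hAsubc u2), sum_ite_const (hAsubc u3)]
          _ ≤ ∑ w ∈ Bᶜ, forceProb G B w := sum_le_sum hpt
      · -- Case 2y-ii: every K vertex has exactly 2 white neighbors
        push_neg at hbig
        have hd2 : ∀ u ∈ K, (G.neighborFinset u \ B).card = 2 := by
          intro u hu
          have h1 := hK2 u hu
          have h2 := hbig u hu
          omega
        have hxK : ∀ u ∈ K, xx G B u = 1/2 := by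
          intro u hu; rw [xx, hd2 u hu]; norm_num
        have hWsub : W ⊆ Bᶜ := by rw [hWdef]; exact filter_subset _ _
        have hhalf : ∀ y ∈ W, 1/2 ≤ forceProb G B y := by
          intro y hyW
          obtain ⟨hyB, u, huB, hadj⟩ := hWblue y hyW
          have huK : u ∈ K := hKof huB hyB hadj
          have hf := force_one huB hyB hadj
          rw [hxK u huK] at hf
          exact hf
        by_cases hl4 : 4 ≤ W.card
        · have h4 : (4:ℝ) ≤ (W.card : ℝ) := by exact_mod_cast hl4
          calc (2:ℝ) ≤ (W.card : ℝ) * (1/2) := by linarith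
            _ = ∑ _w ∈ W, (1/2 : ℝ) := by rw [sum_const, nsmul_eq_mul]
            _ ≤ ∑ w ∈ W, forceProb G B w := sum_le_sum hhalf
            _ ≤ ∑ w ∈ Bᶜ, forceProb G B w := hFsub W hWsub
        · have hW3 : W.card = 3 := by omega
          obtain ⟨a, b, c, hab, hac, hbc, hWabc⟩ := card_eq_three.mp hW3
          have haW : a ∈ W := by rw [hWabc]; simp
          have hbW : b ∈ W := by rw [hWabc]; simp
          have hcW : c ∈ W := by rw [hWabc]; simp
          have hgood : ∀ y ∈ W, 1 < (B.filter (fun u => G.Adj u y)).card →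
              3/4 ≤ forceProb G B y := by
            intro y hyW h2
            obtain ⟨u, hu, v, hv, huv⟩ := one_lt_card.mp h2
            obtain ⟨huB, hadju⟩ := mem_filter.mp hu
            obtain ⟨hvB, hadjv⟩ := mem_filter.mp hv
            have hyB : y ∉ B := (hWblue y hyW).1
            have hxu : xx G B u = 1/2 := hxK u (hKof huB hyB hadju)
            have hxv : xx G B v = 1/2 := hxK v (hKof hvB hyB hadjv)
            have hf := force_two huB hvB hyB hadju hadjv huv
            rw [hxu, hxv] at hf
            norm_num at hf
            linarith
          have hbadpair : ∀ y1 ∈ W, ∀ y2 ∈ W, y1 ≠ y2 →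
              (B.filter (fun u => G.Adj u y1)).card ≤ 1 →
              (B.filter (fun u => G.Adj u y2)).card ≤ 1 → False := by
            intro y1 hy1 y2 hy2 hne hc1 hc2
            have hcu : (B.filter (fun u => G.Adj u y1) ∪ B.filter (fun u => G.Adj u y2)).card ≤ 2 :=
              le_trans (card_union_le _ _) (by omega)
            have hnsub : ¬ K ⊆ B.filter (fun u => G.Adj u y1) ∪ B.filter (fun u => G.Adj u y2) := by
              intro hsub
              have := card_le_card hsub
              omega
            obtain ⟨u, huK, hu2⟩ := not_subset.mp hnsub
            have hsubW : G.neighborFinset u \ B ⊆ (W.erase y1).erase y2 := by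
              intro z hz
              have hzW : z ∈ W := hWof (hKmem u huK).1 hz
              have hz1 : z ≠ y1 := by
                rintro rfl
                exact hu2 (mem_union_left _ (mem_filter.mpr ⟨(hKmem u huK).1, (hadjof hz).1⟩))
              have hz2 : z ≠ y2 := by
                rintro rfl
                exact hu2 (mem_union_right _ (mem_filter.mpr ⟨(hKmem u huK).1, (hadjof hz).1⟩))
              exact mem_erase.mpr ⟨hz2, mem_erase.mpr ⟨hz1, hzW⟩⟩
            have hcard : ((W.erase y1).erase y2).card = 1 := by
              rw [card_erase_of_mem (mem_erase.mpr ⟨hne.symm, hy2⟩), card_erase_of_mem hy1, hW3]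
            have hle := card_le_card hsubW
            rw [hcard] at hle
            have := hd2 u huK
            omega
          have hsum : (2:ℝ) ≤ ∑ w ∈ W, forceProb G B w := by
            rw [hWabc, sum_insert (by simp [hab, hac]), sum_pair hbc]
            by_cases pa : 1 < (B.filter (fun u => G.Adj u a)).card <;>
              by_cases pb : 1 < (B.filter (fun u => G.Adj u b)).card <;>
                by_cases pc : 1 < (B.filter (fun u => G.Adj u c)).card
            · linarith [hgood a haW pa, hgood b hbW pb, hgood c hcW pc]
            · linarith [hgood a haW pa, hgood b hbW pb, hhalf c hcW]
            · linarith [hgood a haW pa, hhalf b hbW, hgood c hcW pc]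
            · exact (hbadpair b hbW c hcW hbc (by omega) (by omega)).elim
            · linarith [hhalf a haW, hgood b hbW pb, hgood c hcW pc]
            · exact (hbadpair a haW c hcW hac (by omega) (by omega)).elim
            · exact (hbadpair a haW b hbW hab (by omega) (by omega)).elim
            · exact (hbadpair a haW b hbW hab (by omega) (by omega)).elim
          linarith [hFsub W hWsub]
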